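/- arXiv:math/0601196 — 2 statements merged into one kernel-verified Lean document; each statement's English description precedes it below -/
import Mathlib

section
/- For every x ∈ ℝ^n one has x ≤ r(x), and for every dominant μ ∈ ℝ^n with x ≤ μ one has r(x) ≤ μ. Consequently r(x) is the unique minimal element, with respect to ≤, of the set {μ ∈ C : x ≤ μ}. -/
/-- The dominant cone `C = {x ∈ ℝⁿ : x₁ ≥ x₂ ≥ ⋯ ≥ xₙ}`. -/
def domCone (n : ℕ) : Set (EuclideanSpace ℝ (Fin n)) :=
  {x | ∀ i j : Fin n, i ≤ j → x j ≤ x i}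

/-- `r` is the map sending each point of `ℝⁿ` to the (unique) closest point
of the dominant cone. -/
def IsClosestPointMap (n : ℕ)
    (r : EuclideanSpace ℝ (Fin n) → EuclideanSpace ℝ (Fin n)) : Prop :=
  ∀ x, r x ∈ domCone n ∧ ∀ c ∈ domCone n, dist x (r x) ≤ dist x c

/-- `S_k(x) = x₁ + ⋯ + x_k`, the sum of the first `k` coordinates. -/
def psum {n : ℕ} (x : Fin n → ℝ) (k : ℕ) : ℝ :=
  ∑ j ∈ Finset.univ.filter (fun j : Fin n => (j : ℕ) < k), x j

/-- The dominance order: `x ≤ y` iff `S_k(x) ≤ S_k(y)` for `k = 1, …, n-1`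
and `S_n(x) = S_n(y)`. -/
def dle {n : ℕ} (x y : Fin n → ℝ) : Prop :=
  (∀ k, 1 ≤ k → k < n → psum x k ≤ psum y k) ∧ psum x n = psum y n

open RealInnerProductSpace

noncomputable def ind (n k : ℕ) : EuclideanSpace ℝ (Fin n) :=
  WithLp.toLp 2 (fun j : Fin n => if (j : ℕ) < k then (1 : ℝ) else 0)

lemma psum_zero {n : ℕ} (y : Fin n → ℝ) : psum y 0 = 0 := by
  simp [psum]

lemma psum_succ {n : ℕ} (y : Fin n → ℝ) {k : ℕ} (hk : k < n) :
    psum y (k + 1) = psum y k + y ⟨k, hk⟩ := by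
  unfold psum
  rw [Finset.sum_filter, Finset.sum_filter]
  have : ∀ j : Fin n, (if (j : ℕ) < k + 1 then y j else 0) =
      (if (j : ℕ) < k then y j else 0) + (if j = ⟨k, hk⟩ then y j else 0) := by
    intro j
    rcases lt_trichotomy (j : ℕ) k with h | h | h
    · simp [h, Nat.lt_succ_of_lt h, show j ≠ ⟨k, hk⟩ from fun e => by simp [e] at h]
    · have : j = ⟨k, hk⟩ := Fin.ext h
      simp [this, h]
    · simp [show ¬((j:ℕ) < k + 1) from by omega, show ¬((j:ℕ) < k) from by omega,
        show j ≠ ⟨k, hk⟩ from fun e => by simp [e] at h]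
  rw [Finset.sum_congr rfl (fun j _ => this j), Finset.sum_add_distrib]
  congr 1
  simp

lemma inner_ind {n : ℕ} (v : EuclideanSpace ℝ (Fin n)) (k : ℕ) :
    ⟪v, ind n k⟫ = psum v k := by
  rw [PiLp.inner_apply, psum, Finset.sum_filter]
  refine Finset.sum_congr rfl fun j _ => ?_
  simp only [ind, PiLp.toLp_apply, RCLike.inner_apply, conj_trivial]
  by_cases h : (j : ℕ) < k <;> simp [h]

lemma mem_domCone_of_adj {n : ℕ} (x : EuclideanSpace ℝ (Fin n))
    (h : ∀ m : ℕ, ∀ hm : m + 1 < n, x ⟨m + 1, hm⟩ ≤ x ⟨m, Nat.lt_of_succ_lt hm⟩) :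
    x ∈ domCone n := by
  intro i j hij
  have key : ∀ d : ℕ, ∀ hd : (i : ℕ) + d < n, x ⟨(i : ℕ) + d, hd⟩ ≤ x i := by
    intro d
    induction d with
    | zero => intro hd; simp
    | succ m ih =>
      intro hd
      have h1 : (i : ℕ) + m < n := by omega
      calc x ⟨(i : ℕ) + (m + 1), hd⟩ = x ⟨(i : ℕ) + m + 1, by omega⟩ := rfl
        _ ≤ x ⟨(i : ℕ) + m, h1⟩ := h _ _
        _ ≤ x i := ih h1
  have hij' : (i : ℕ) ≤ (j : ℕ) := hij
  obtain ⟨d, hd⟩ := Nat.exists_eq_add_of_le hij'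
  have := key d (by omega)
  convert this using 2
  exact Fin.ext hd

lemma convex_domCone (n : ℕ) : Convex ℝ (domCone n) := by
  intro a ha b hb s t hs ht _
  intro i j hij
  simp only [PiLp.add_apply, PiLp.smul_apply, smul_eq_mul]
  have := ha i j hij
  have := hb i j hij
  nlinarith

lemma domCone_add_ind {n : ℕ} {p : EuclideanSpace ℝ (Fin n)} (hp : p ∈ domCone n) (k : ℕ) :
    p + ind n k ∈ domCone n := by
  apply mem_domCone_of_adj
  intro m hm
  simp only [PiLp.add_apply, ind, PiLp.toLp_apply]
  have := hp ⟨m, Nat.lt_of_succ_lt hm⟩ ⟨m + 1, hm⟩ (by simp)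
  by_cases h1 : m + 1 < k <;> by_cases h2 : m < k <;> simp [h1, h2] <;>
    first | linarith | omega

lemma domCone_sub_ones {n : ℕ} {p : EuclideanSpace ℝ (Fin n)} (hp : p ∈ domCone n) :
    p - ind n n ∈ domCone n := by
  apply mem_domCone_of_adj
  intro m hm
  simp only [PiLp.sub_apply, ind, PiLp.toLp_apply]
  have := hp ⟨m, Nat.lt_of_succ_lt hm⟩ ⟨m + 1, hm⟩ (by simp)
  simp only [show (m : ℕ) < n from by omega, show m + 1 < n from hm, if_pos]
  linarith

lemma domCone_sub_smul_ind {n : ℕ} {p : EuclideanSpace ℝ (Fin n)} (hp : p ∈ domCone n)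
    {m : ℕ} (hm : m + 1 < n) (t : ℝ) (ht : t ≤ p ⟨m, Nat.lt_of_succ_lt hm⟩ - p ⟨m + 1, hm⟩) :
    p - t • ind n (m + 1) ∈ domCone n := by
  apply mem_domCone_of_adj
  intro l hl
  simp only [PiLp.sub_apply, PiLp.smul_apply, ind, PiLp.toLp_apply, smul_eq_mul]
  have hadj := hp ⟨l, Nat.lt_of_succ_lt hl⟩ ⟨l + 1, hl⟩ (by simp)
  rcases lt_trichotomy l m with h | h | h
  · rw [if_pos (show l + 1 < m + 1 by omega), if_pos (show l < m + 1 by omega)]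
    linarith
  · subst h
    rw [if_neg (show ¬(l + 1 < l + 1) by omega), if_pos (show l < l + 1 by omega)]
    have e1 : p ⟨l + 1, hl⟩ = p ⟨l + 1, hm⟩ := rfl
    have e2 : p ⟨l, Nat.lt_of_succ_lt hl⟩ = p ⟨l, Nat.lt_of_succ_lt hm⟩ := rfl
    rw [e1]
    rw [e2] at hadj
    linarith
  · rw [if_neg (show ¬(l + 1 < m + 1) by omega), if_neg (show ¬(l < m + 1) by omega)]
    linarith

lemma psum_sub {n : ℕ} (x y : EuclideanSpace ℝ (Fin n)) (k : ℕ) :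
    psum (x - y) k = psum x k - psum y k := by
  unfold psum
  rw [← Finset.sum_sub_distrib]
  exact Finset.sum_congr rfl fun j _ => by simp [PiLp.sub_apply]

set_option maxHeartbeats 1000000 in
lemma variational {n : ℕ} {r : EuclideanSpace ℝ (Fin n) → EuclideanSpace ℝ (Fin n)}
    (hr : IsClosestPointMap n r) (x : EuclideanSpace ℝ (Fin n)) :
    ∀ c ∈ domCone n, ⟪x - r x, c - r x⟫ ≤ 0 := by
  obtain ⟨hrC, hmin⟩ := hr x
  have : ‖x - r x‖ = ⨅ w : domCone n, ‖x - w‖ := by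
    haveI : Nonempty (domCone n) := ⟨⟨r x, hrC⟩⟩
    apply le_antisymm
    · apply le_ciInf
      intro w
      have := hmin w w.2
      rwa [dist_eq_norm, dist_eq_norm] at this
    · have hbdd : BddBelow (Set.range fun w : domCone n => ‖x - w‖) := by
        refine ⟨0, ?_⟩
        rintro _ ⟨w, rfl⟩
        exact norm_nonneg _
      exact ciInf_le hbdd ⟨r x, hrC⟩
  exact (norm_eq_iInf_iff_real_inner_le_zero (convex_domCone n) hrC).1 this

lemma psum_x_le {n : ℕ} {r : EuclideanSpace ℝ (Fin n) → EuclideanSpace ℝ (Fin n)}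
    (hr : IsClosestPointMap n r) (x : EuclideanSpace ℝ (Fin n)) (k : ℕ) :
    psum x k ≤ psum (r x) k := by
  have h := variational hr x (r x + ind n k) (domCone_add_ind (hr x).1 k)
  rw [add_sub_cancel_left, inner_ind, psum_sub] at h
  linarith

lemma psum_total_eq {n : ℕ} {r : EuclideanSpace ℝ (Fin n) → EuclideanSpace ℝ (Fin n)}
    (hr : IsClosestPointMap n r) (x : EuclideanSpace ℝ (Fin n)) :
    psum x n = psum (r x) n := by
  have h1 := psum_x_le hr x n
  have h := variational hr x (r x - ind n n) (domCone_sub_ones (hr x).1)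
  rw [sub_sub_cancel_left, inner_neg_right, inner_ind, psum_sub] at h
  linarith

lemma psum_slack {n : ℕ} {r : EuclideanSpace ℝ (Fin n) → EuclideanSpace ℝ (Fin n)}
    (hr : IsClosestPointMap n r) (x : EuclideanSpace ℝ (Fin n)) {m : ℕ} (hm : m + 1 < n)
    (hdrop : r x ⟨m + 1, hm⟩ < r x ⟨m, Nat.lt_of_succ_lt hm⟩) :
    psum (r x) (m + 1) ≤ psum x (m + 1) := by
  set t : ℝ := r x ⟨m, Nat.lt_of_succ_lt hm⟩ - r x ⟨m + 1, hm⟩ with ht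
  have htpos : 0 < t := by simp [ht]; linarith
  have h := variational hr x (r x - t • ind n (m + 1))
    (domCone_sub_smul_ind (hr x).1 hm t le_rfl)
  rw [sub_sub_cancel_left, inner_neg_right, real_inner_smul_right, inner_ind, psum_sub] at h
  nlinarith

/-- Proposition 1.1(3) for `GL_n`: `x ≤ r x`, `r x ≤ μ` for every dominant `μ ≥ x`,
and `r x` is the unique such minimal element of `{μ ∈ C : x ≤ μ}`. -/
theorem stmt_3 (n : ℕ) (hn : 1 ≤ n)
    (r : EuclideanSpace ℝ (Fin n) → EuclideanSpace ℝ (Fin n))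
    (hr : IsClosestPointMap n r)
    (x : EuclideanSpace ℝ (Fin n)) :
    dle x (r x) ∧
    (∀ μ ∈ domCone n, dle x μ → dle (r x) μ) ∧
    (∀ z ∈ domCone n, dle x z → (∀ μ ∈ domCone n, dle x μ → dle z μ) → z = r x) := by
  have hrC := (hr x).1
  have h1 : dle x (r x) :=
    ⟨fun k _ _ => psum_x_le hr x k, psum_total_eq hr x⟩
  have h2 : ∀ μ ∈ domCone n, dle x μ → dle (r x) μ := by
    intro μ hμC hxμ
    have htot : psum (r x) n = psum μ n := by
      rw [← psum_total_eq hr x, hxμ.2]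
    have key : ∀ d m : ℕ, m + 1 + d = n →
        0 < psum (r x) (m + 1) - psum μ (m + 1) →
        psum (r x) m - psum μ m < psum (r x) (m + 1) - psum μ (m + 1) → False := by
      intro d
      induction d with
      | zero =>
        intro m hmn hpos _
        have : m + 1 = n := by omega
        rw [this] at hpos
        linarith
      | succ d ih =>
        intro m hmn hpos hinc
        have hm : m + 1 < n := by omega
        have hxm : psum x (m + 1) ≤ psum μ (m + 1) := hxμ.1 (m + 1) (by omega) hm
        have hxlt : psum x (m + 1) < psum (r x) (m + 1) := by linarith
        have hflat : r x ⟨m, Nat.lt_of_succ_lt hm⟩ = r x ⟨m + 1, hm⟩ := by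
          by_contra hne
          have hlt : r x ⟨m + 1, hm⟩ < r x ⟨m, Nat.lt_of_succ_lt hm⟩ :=
            lt_of_le_of_ne (hrC ⟨m, Nat.lt_of_succ_lt hm⟩ ⟨m + 1, hm⟩ (by simp)) (Ne.symm hne)
          have := psum_slack hr x hm hlt
          linarith
        have hμadj : μ ⟨m + 1, hm⟩ ≤ μ ⟨m, Nat.lt_of_succ_lt hm⟩ :=
          hμC ⟨m, Nat.lt_of_succ_lt hm⟩ ⟨m + 1, hm⟩ (by simp)
        have e1 := psum_succ (r x) hm
        have e2 := psum_succ μ hm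
        have e3 := psum_succ (r x) (Nat.lt_of_succ_lt hm)
        have e4 := psum_succ μ (Nat.lt_of_succ_lt hm)
        apply ih (m + 1) (by omega)
        · rw [e1, e2]
          rw [e3, e4] at hpos hinc ⊢
          linarith
        · rw [e1, e2]; rw [e3, e4] at hinc; linarith
    have hle : ∀ k, k ≤ n → psum (r x) k - psum μ k ≤ 0 := by
      intro k
      induction k with
      | zero => intro _; simp [psum_zero]
      | succ m ihm =>
        intro hk
        by_contra hpos
        push_neg at hpos
        exact key (n - (m + 1)) m (by omega) hpos
          (by have := ihm (by omega); linarith)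
    exact ⟨fun k _ hk => by have := hle k (le_of_lt hk); linarith, htot⟩
  refine ⟨h1, h2, ?_⟩
  intro z hzC hxz hzmin
  have hz1 : dle z (r x) := hzmin (r x) hrC h1
  have hz2 : dle (r x) z := h2 z hzC hxz
  have hps : ∀ k, k ≤ n → psum z k = psum (r x) k := by
    intro k hk
    rcases Nat.lt_or_ge k n with hkn | hkn
    · rcases Nat.eq_zero_or_pos k with h0 | h0
      · rw [h0, psum_zero, psum_zero]
      · exact le_antisymm (hz1.1 k h0 hkn) (hz2.1 k h0 hkn)
    · have : k = n := le_antisymm hk hkn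
      rw [this]; exact hz1.2
  ext j
  have e1 := psum_succ z j.isLt
  have e2 := psum_succ (r x) j.isLt
  have ez : z ⟨(j : ℕ), j.isLt⟩ = z j := by congr
  have er : r x ⟨(j : ℕ), j.isLt⟩ = r x j := by congr
  rw [ez] at e1
  rw [er] at e2
  have q1 := hps (j : ℕ) (le_of_lt j.isLt)
  have q2 := hps ((j : ℕ) + 1) j.isLt
  linarith
end

section
/- Let μ ∈ ℚ^n with μ_1 ≥ μ_2 ≥ ⋯ ≥ μ_n. Then ν = μ if and only if: val(a_i) ≤ μ_1 + ⋯ + μ_i for every i ∈ {1,…,n−1} with μ_i = μ_{i+1}; val(a_i) = μ_1 + ⋯ + μ_i for every i ∈ {1,…,n−1} with μ_i > μ_{i+1}; and val(a_n) = μ_1 + ⋯ + μ_n. -/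
open Polynomial

/-- `S_k(ν) = ν₁ + ⋯ + ν_k`, the sum of the first `k` coordinates. -/
def psumQ {n : ℕ} (x : Fin n → ℚ) (k : ℕ) : ℚ :=
  ∑ j ∈ Finset.univ.filter (fun j : Fin n => (j : ℕ) < k), x j

section Val

variable {K : Type*} [Field K] (v : K → WithBot ℚ)
    (hv0 : ∀ x : K, v x = ⊥ ↔ x = 0)
    (hvmul : ∀ x y : K, x ≠ 0 → y ≠ 0 → v (x * y) = v x + v y)
    (hvadd : ∀ x y : K, v (x + y) ≤ max (v x) (v y))

include hv0 hvmul in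
lemma v_one' : v 1 = 0 := by
  have h := hvmul 1 1 one_ne_zero one_ne_zero
  rw [mul_one] at h
  obtain ⟨q, hq⟩ := WithBot.ne_bot_iff_exists.mp (fun hb => one_ne_zero ((hv0 1).mp hb))
  rw [← hq] at h ⊢
  have : q = q + q := by exact_mod_cast h
  have : q = 0 := by linarith
  simp [this]

include hv0 hvmul in
lemma v_neg_one' : v (-1) = 0 := by
  have h := hvmul (-1) (-1) (by norm_num) (by norm_num)
  rw [neg_mul_neg, one_mul, v_one' v hv0 hvmul] at h
  obtain ⟨q, hq⟩ := WithBot.ne_bot_iff_exists.mp (fun hb => (by norm_num : (-1:K) ≠ 0) ((hv0 _).mp hb))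
  rw [← hq] at h ⊢
  have : (0:ℚ) = q + q := by exact_mod_cast h
  have : q = 0 := by linarith
  simp [this]

include hv0 hvmul in
lemma v_neg' (x : K) : v (-x) = v x := by
  rcases eq_or_ne x 0 with rfl | hx
  · simp
  · have h := hvmul (-1) x (by norm_num) hx
    rw [neg_one_mul, v_neg_one' v hv0 hvmul, zero_add] at h
    exact h

include hv0 hvmul in
lemma v_prod' {ι : Type*} (A : Finset ι) (g : ι → K) (q : ι → ℚ)
    (hg : ∀ j ∈ A, g j ≠ 0) (hq : ∀ j ∈ A, v (g j) = ((q j : ℚ) : WithBot ℚ)) :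
    v (∏ j ∈ A, g j) = ((∑ j ∈ A, q j : ℚ) : WithBot ℚ) := by
  classical
  induction A using Finset.cons_induction with
  | empty => simpa using v_one' v hv0 hvmul
  | cons a A ha ih =>
    rw [Finset.prod_cons, Finset.sum_cons,
      hvmul _ _ (hg a (Finset.mem_cons_self a A))
        (Finset.prod_ne_zero_iff.mpr fun j hj => hg j (Finset.mem_cons_of_mem hj)),
      hq a (Finset.mem_cons_self a A),
      ih (fun j hj => hg j (Finset.mem_cons_of_mem hj))
        (fun j hj => hq j (Finset.mem_cons_of_mem hj))]
    push_cast
    rfl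

include hv0 hvadd in
lemma v_sum_le' {ι : Type*} (S : Finset ι) (g : ι → K) :
    v (∑ s ∈ S, g s) ≤ S.sup (fun s => v (g s)) := by
  classical
  induction S using Finset.cons_induction with
  | empty => simp [(hv0 0).mpr rfl]
  | cons a S ha ih =>
    rw [Finset.sum_cons, Finset.sup_cons]
    exact le_trans (hvadd _ _) (max_le_max le_rfl ih)

include hv0 hvmul hvadd in
lemma v_add_left' (x y : K) (h : v y < v x) : v (x + y) = v x := by
  refine le_antisymm (le_trans (hvadd x y) (max_le le_rfl h.le)) ?_
  have h2 := hvadd (x + y) (-y)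
  rw [add_neg_cancel_right, v_neg' v hv0 hvmul] at h2
  rcases max_cases (v (x + y)) (v y) with ⟨he, _⟩ | ⟨he, _⟩
  · rw [he] at h2; exact h2
  · rw [he] at h2; exact absurd h2 (not_le.mpr h)

include hv0 hvmul hvadd in
lemma v_sum_eq' {ι : Type*} [DecidableEq ι] (S : Finset ι) (g : ι → K) (a : ι) (ha : a ∈ S)
    (h0 : v (g a) ≠ ⊥) (hmax : ∀ b ∈ S, b ≠ a → v (g b) < v (g a)) :
    v (∑ s ∈ S, g s) = v (g a) := by
  rw [← Finset.add_sum_erase S g ha]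
  refine v_add_left' v hv0 hvmul hvadd _ _ ?_
  refine lt_of_le_of_lt (v_sum_le' v hv0 hvadd _ g) ?_
  rw [Finset.sup_lt_iff (bot_lt_iff_ne_bot.mpr h0)]
  intro b hb
  exact hmax b (Finset.mem_of_mem_erase hb) (Finset.ne_of_mem_erase hb)

end Val

section Comb

lemma psumQ_zero {n : ℕ} (x : Fin n → ℚ) : psumQ x 0 = 0 := by
  simp [psumQ]

lemma psumQ_succ {n : ℕ} (x : Fin n → ℚ) (k : ℕ) (hk : k < n) :
    psumQ x (k + 1) = psumQ x k + x ⟨k, hk⟩ := by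
  have h : Finset.univ.filter (fun j : Fin n => (j : ℕ) < k + 1) =
      insert ⟨k, hk⟩ (Finset.univ.filter (fun j : Fin n => (j : ℕ) < k)) := by
    ext j
    simp only [Finset.mem_filter, Finset.mem_univ, true_and, Finset.mem_insert, Fin.ext_iff]
    omega
  rw [psumQ, h, Finset.sum_insert (by simp), psumQ]
  ring

lemma topk_eq_map {n : ℕ} (k : ℕ) (hk : k ≤ n) :
    Finset.univ.filter (fun j : Fin n => (j : ℕ) < k) =
      Finset.map (Fin.castLEEmb hk) Finset.univ := by
  ext j
  simp only [Finset.mem_filter, Finset.mem_univ, true_and, Finset.mem_map]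
  constructor
  · intro hj
    refine ⟨⟨(j : ℕ), hj⟩, ?_⟩
    simp [Fin.castLEEmb, Fin.ext_iff]
  · rintro ⟨m, rfl⟩
    simpa [Fin.castLEEmb] using m.2

lemma psumQ_eq_sum_fin {n : ℕ} (x : Fin n → ℚ) (k : ℕ) (hk : k ≤ n) :
    psumQ x k = ∑ m : Fin k, x (Fin.castLE hk m) := by
  rw [psumQ, topk_eq_map k hk, Finset.sum_map]
  rfl

lemma card_topk {n : ℕ} (k : ℕ) (hk : k ≤ n) :
    (Finset.univ.filter (fun j : Fin n => (j : ℕ) < k)).card = k := by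
  rw [topk_eq_map k hk, Finset.card_map, Finset.card_univ, Fintype.card_fin]

lemma strictMono_nat_le {k n : ℕ} (f : Fin k → Fin n) (hf : StrictMono f) :
    ∀ m : ℕ, ∀ hm : m < k, m ≤ (f ⟨m, hm⟩ : ℕ) := by
  intro m
  induction m with
  | zero => intro hm; exact Nat.zero_le _
  | succ p ih =>
    intro hm
    have h1 := ih (by omega)
    have h2 : f ⟨p, by omega⟩ < f ⟨p + 1, hm⟩ := hf (by simp [Fin.lt_def])
    have h3 : (f ⟨p, by omega⟩ : ℕ) < (f ⟨p + 1, hm⟩ : ℕ) := h2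
    omega

lemma sum_eq_sum_emb {n : ℕ} (x : Fin n → ℚ) (B : Finset (Fin n)) {k : ℕ} (hB : B.card = k) :
    ∑ j ∈ B, x j = ∑ m : Fin k, x (B.orderEmbOfFin hB m) := by
  have he : B = Finset.map (B.orderEmbOfFin hB).toEmbedding Finset.univ := by
    apply Finset.coe_injective
    rw [Finset.coe_map, Finset.coe_univ, Set.image_univ]
    exact (Finset.range_orderEmbOfFin B hB).symm
  conv_lhs => rw [he]
  rw [Finset.sum_map]
  rfl

lemma sum_le_psumQ {n : ℕ} (x : Fin n → ℚ) (hx : ∀ i j : Fin n, i ≤ j → x j ≤ x i)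
    (B : Finset (Fin n)) (k : ℕ) (hB : B.card = k) :
    ∑ j ∈ B, x j ≤ psumQ x k := by
  have hk : k ≤ n := hB ▸ (Finset.card_le_card (Finset.subset_univ B)).trans_eq
    (by rw [Finset.card_univ, Fintype.card_fin])
  rw [sum_eq_sum_emb x B hB, psumQ_eq_sum_fin x k hk]
  refine Finset.sum_le_sum fun m _ => hx _ _ ?_
  have := strictMono_nat_le _ (B.orderEmbOfFin hB).strictMono (m : ℕ) m.2
  simpa [Fin.le_def] using this

lemma sum_lt_psumQ {n : ℕ} (x : Fin n → ℚ) (hx : ∀ i j : Fin n, i ≤ j → x j ≤ x i)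
    (k : ℕ) (h1 : 1 ≤ k) (h2 : k < n)
    (hbreak : x ⟨k, h2⟩ < x ⟨k - 1, (Nat.sub_le k 1).trans_lt h2⟩)
    (B : Finset (Fin n)) (hB : B.card = k)
    (hne : B ≠ Finset.univ.filter (fun j : Fin n => (j : ℕ) < k)) :
    ∑ j ∈ B, x j < psumQ x k := by
  classical
  have hk : k ≤ n := h2.le
  set e := B.orderEmbOfFin hB with hedef
  -- the top element of the embedding has index ≥ k
  have hbig : k ≤ (e ⟨k - 1, by omega⟩ : ℕ) := by
    by_contra hc
    push_neg at hc
    -- then all elements of B are < k, so B = top k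
    apply hne
    apply Finset.eq_of_subset_of_card_le
    · intro b hb
      obtain ⟨m, hm⟩ := Set.ext_iff.mp (Finset.range_orderEmbOfFin B hB) b |>.mpr hb
      have hmle : m ≤ (⟨k - 1, by omega⟩ : Fin k) := by
        simp [Fin.le_def]; omega
      have : e m ≤ e ⟨k - 1, by omega⟩ := e.monotone hmle
      simp only [Finset.mem_filter, Finset.mem_univ, true_and]
      calc (b : ℕ) = (e m : ℕ) := by rw [hm]
        _ ≤ (e ⟨k - 1, by omega⟩ : ℕ) := this
        _ < k := hc
    · rw [hB, card_topk k hk]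
  rw [sum_eq_sum_emb x B hB, psumQ_eq_sum_fin x k hk]
  refine Finset.sum_lt_sum (fun m _ => hx _ _ ?_) ⟨⟨k - 1, by omega⟩, Finset.mem_univ _, ?_⟩
  · have := strictMono_nat_le _ (B.orderEmbOfFin hB).strictMono (m : ℕ) m.2
    simpa [Fin.le_def] using this
  · have hle : x (e ⟨k - 1, by omega⟩) ≤ x ⟨k, h2⟩ := hx _ _ (by simpa [Fin.le_def] using hbig)
    have : x (Fin.castLE hk ⟨k - 1, by omega⟩) = x ⟨k - 1, by omega⟩ := by
      congr 1
    rw [this]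
    exact lt_of_le_of_lt hle hbreak

end Comb

section MinPrin

lemma min_principle (n : ℕ) (φ : ℕ → ℚ) (h0 : φ 0 = 0) (hn : φ n = 0)
    (hint : ∀ k, 1 ≤ k → k < n → 0 ≤ φ k ∨ φ (k - 1) + φ (k + 1) ≤ 2 * φ k) :
    ∀ k, k ≤ n → 0 ≤ φ k := by
  classical
  by_contra hc
  push_neg at hc
  obtain ⟨kb, hkb, hkbneg⟩ := hc
  have hex : ∃ k, k ≤ n ∧ ∀ j ≤ n, φ k ≤ φ j := by
    obtain ⟨k, hk, hmin⟩ := Finset.exists_min_image (Finset.range (n + 1)) φ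
      ⟨0, by simp⟩
    exact ⟨k, by simpa using Nat.lt_succ_iff.mp (Finset.mem_range.mp hk),
      fun j hj => hmin j (Finset.mem_range.mpr (Nat.lt_succ_of_le hj))⟩
  set k0 := Nat.find hex with hk0def
  obtain ⟨hk0n, hk0min⟩ := Nat.find_spec hex
  have hneg : φ k0 < 0 := lt_of_le_of_lt (hk0min kb hkb) hkbneg
  have hk0pos : 1 ≤ k0 := by
    rcases Nat.eq_zero_or_pos k0 with h | h
    · rw [h, h0] at hneg; exact absurd hneg (by norm_num)
    · exact h
  have hk0lt : k0 < n := by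
    rcases lt_or_eq_of_le hk0n with h | h
    · exact h
    · exfalso
      rw [hk0def, h, hn] at hneg
      exact absurd hneg (by norm_num)
  rcases hint k0 hk0pos hk0lt with h | h
  · exact absurd hneg (not_lt.mpr h)
  · have h1 : φ k0 ≤ φ (k0 + 1) := hk0min _ (by omega)
    have h2 : φ k0 ≤ φ (k0 - 1) := hk0min _ (by omega)
    have h3 : φ (k0 - 1) ≤ φ k0 := by linarith
    have h4 : ∀ j ≤ n, φ (k0 - 1) ≤ φ j := fun j hj => le_trans h3 (hk0min j hj)
    have := Nat.find_min hex (m := k0 - 1) (by omega)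
    exact this ⟨by omega, h4⟩

end MinPrin

section Vieta

variable {K : Type*} [Field K]

lemma coeff_formula (n : ℕ) (t : Fin n → K) (i : ℕ) (hi : i ≤ n) :
    (∏ j : Fin n, (X - C (t j))).coeff (n - i) =
      ∑ A ∈ Finset.univ.powersetCard i, ∏ j ∈ A, (-(t j)) := by
  have h : (∏ j : Fin n, (X - C (t j))) = ∏ j : Fin n, (X + C (-(t j))) := by
    simp [sub_eq_add_neg]
  have hcard : (Finset.univ : Finset (Fin n)).card = n := by
    rw [Finset.card_univ, Fintype.card_fin]
  rw [h, Finset.prod_X_add_C_coeff Finset.univ _ (by omega)]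
  congr 1
  rw [hcard]
  congr 1
  omega

end Vieta

/-- Newton stratum description (Theorem 1.4(4) + Theorem 1.3 for `GL_n`): for
nonincreasing `μ ∈ ℚⁿ`, the slope vector `ν` of `f` equals `μ` iff
`val(a_i) ≤ S_i(μ)` whenever `μ_i = μ_{i+1}`, `val(a_i) = S_i(μ)` whenever
`μ_i > μ_{i+1}` (`1 ≤ i ≤ n-1`), and `val(aₙ) = S_n(μ)`
(here `a_i = f.coeff (n - i)`). -/
theorem stmt_12 {K : Type*} [Field K] [IsAlgClosed K]
    (v : K → WithBot ℚ)
    (hv0 : ∀ x : K, v x = ⊥ ↔ x = 0)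
    (hvmul : ∀ x y : K, x ≠ 0 → y ≠ 0 → v (x * y) = v x + v y)
    (hvadd : ∀ x y : K, v (x + y) ≤ max (v x) (v y))
    (n : ℕ) (hn : 1 ≤ n)
    (f : Polynomial K) (t : Fin n → K) (ht : ∀ j, t j ≠ 0)
    (hfact : f = ∏ j : Fin n, (X - C (t j)))
    (ν : Fin n → ℚ) (hν : ∀ i j : Fin n, i ≤ j → ν j ≤ ν i)
    (σ : Equiv.Perm (Fin n)) (hσ : ∀ j, v (t j) = ((ν (σ j) : ℚ) : WithBot ℚ))
    (μ : Fin n → ℚ) (hμ : ∀ i j : Fin n, i ≤ j → μ j ≤ μ i) :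
    ν = μ ↔
      ((∀ i : ℕ, ∀ h1 : 1 ≤ i, ∀ h2 : i < n,
          μ ⟨i - 1, by omega⟩ = μ ⟨i, h2⟩ →
          v (f.coeff (n - i)) ≤ ((psumQ μ i : ℚ) : WithBot ℚ)) ∧
       (∀ i : ℕ, ∀ h1 : 1 ≤ i, ∀ h2 : i < n,
          μ ⟨i, h2⟩ < μ ⟨i - 1, by omega⟩ →
          v (f.coeff (n - i)) = ((psumQ μ i : ℚ) : WithBot ℚ)) ∧
       v (f.coeff 0) = ((psumQ μ n : ℚ) : WithBot ℚ)) := by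
  classical
  -- valuation of each product term
  have hterm : ∀ A : Finset (Fin n), v (∏ j ∈ A, (-(t j))) =
      ((∑ j ∈ A.image σ, ν j : ℚ) : WithBot ℚ) := by
    intro A
    rw [v_prod' v hv0 hvmul A _ (fun j => ν (σ j)) (fun j _ => neg_ne_zero.mpr (ht j))
      (fun j _ => by rw [v_neg' v hv0 hvmul]; exact hσ j)]
    congr 1
    exact (Finset.sum_image (fun a _ b _ h => σ.injective h)).symm
  -- F1 : v(a_i) ≤ S_i(ν)
  have F1 : ∀ i : ℕ, i ≤ n → v (f.coeff (n - i)) ≤ ((psumQ ν i : ℚ) : WithBot ℚ) := by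
    intro i hin
    rw [hfact, coeff_formula n t i hin]
    refine le_trans (v_sum_le' v hv0 hvadd _ _) (Finset.sup_le fun A hA => ?_)
    rw [hterm A]
    have hc : (A.image σ).card = i := by
      rw [Finset.card_image_of_injective _ σ.injective,
        (Finset.mem_powersetCard.mp hA).2]
    exact_mod_cast sum_le_psumQ ν hν (A.image σ) i hc
  -- F2 : v(a_n) = S_n(ν)
  have F2 : v (f.coeff 0) = ((psumQ ν n : ℚ) : WithBot ℚ) := by
    have h0 : (0 : ℕ) = n - n := by omega
    rw [hfact, h0, coeff_formula n t n le_rfl]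
    have hps : (Finset.univ : Finset (Fin n)).powersetCard n = {Finset.univ} := by
      have hcard : (Finset.univ : Finset (Fin n)).card = n := by
        rw [Finset.card_univ, Fintype.card_fin]
      have h := Finset.powersetCard_self (Finset.univ : Finset (Fin n))
      rwa [hcard] at h
    rw [hps, Finset.sum_singleton, hterm]
    congr 1
    have h1 : Finset.univ.image ⇑σ = (Finset.univ : Finset (Fin n)) :=
      Finset.image_univ_of_surjective σ.surjective
    have h2 : Finset.univ.filter (fun j : Fin n => (j : ℕ) < n) =
        (Finset.univ : Finset (Fin n)) := by
      ext j; simp [j.2]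
    rw [h1, psumQ, h2]
  -- F3 : at breakpoints of ν, v(a_i) = S_i(ν)
  have F3 : ∀ i : ℕ, ∀ h1 : 1 ≤ i, ∀ h2 : i < n,
      ν ⟨i, h2⟩ < ν ⟨i - 1, by omega⟩ →
      v (f.coeff (n - i)) = ((psumQ ν i : ℚ) : WithBot ℚ) := by
    intro i h1 h2 hbr
    rw [hfact, coeff_formula n t i h2.le]
    set Tk := Finset.univ.filter (fun j : Fin n => (j : ℕ) < i) with hTk
    set Astar := Tk.image ⇑σ.symm with hAstar
    have himage : Astar.image ⇑σ = Tk := by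
      rw [hAstar, Finset.image_image]
      simp
    have hAcard : Astar.card = i := by
      rw [hAstar, Finset.card_image_of_injective _ σ.symm.injective, hTk,
        card_topk i h2.le]
    have hAmem : Astar ∈ (Finset.univ : Finset (Fin n)).powersetCard i :=
      Finset.mem_powersetCard.mpr ⟨Finset.subset_univ _, hAcard⟩
    have hvstar : v (∏ j ∈ Astar, (-(t j))) = ((psumQ ν i : ℚ) : WithBot ℚ) := by
      rw [hterm, himage]
      rfl
    rw [v_sum_eq' v hv0 hvmul hvadd _ _ Astar hAmem
      (by rw [hvstar]; exact WithBot.coe_ne_bot) ?_, hvstar]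
    intro B hB hBne
    rw [hterm B, hvstar, WithBot.coe_lt_coe]
    have hBcard : (B.image ⇑σ).card = i := by
      rw [Finset.card_image_of_injective _ σ.injective,
        (Finset.mem_powersetCard.mp hB).2]
    refine sum_lt_psumQ ν hν i h1 h2 hbr (B.image ⇑σ) hBcard ?_
    intro hc
    apply hBne
    have : (B.image ⇑σ).image ⇑σ.symm = B := by
      rw [Finset.image_image]
      simp
    rw [← this, hc, ← hTk, ← hAstar]
  constructor
  · -- forward
    intro h
    subst h
    exact ⟨fun i h1 h2 _ => F1 i h2.le, fun i h1 h2 hbr => F3 i h1 h2 hbr, F2⟩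
  · -- backward
    rintro ⟨C1, C2, C3⟩
    -- combined: v(a_i) ≤ S_i(μ) for all interior i
    have H1 : ∀ i : ℕ, 1 ≤ i → ∀ h2 : i < n,
        v (f.coeff (n - i)) ≤ ((psumQ μ i : ℚ) : WithBot ℚ) := by
      intro i h1 h2
      rcases lt_or_eq_of_le (hμ ⟨i - 1, by omega⟩ ⟨i, h2⟩ (by simp only [Fin.le_def]; omega))
        with hlt | heq
      · exact le_of_eq (C2 i h1 h2 hlt)
      · exact C1 i h1 h2 heq.symm
    have hend : psumQ ν n = psumQ μ n := by
      have := F2.symm.trans C3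
      exact_mod_cast this
    -- S(ν) ≥ S(μ)
    have hge : ∀ k, k ≤ n → 0 ≤ psumQ ν k - psumQ μ k := by
      refine min_principle n _ (by simp [psumQ_zero]) (by simp [hend]) ?_
      intro k hk1 hk2
      rcases lt_or_eq_of_le (hμ ⟨k - 1, by omega⟩ ⟨k, hk2⟩ (by simp only [Fin.le_def]; omega))
        with hlt | heq
      · left
        have hA := C2 k hk1 hk2 hlt
        have hB := F1 k hk2.le
        rw [hA] at hB
        have : psumQ μ k ≤ psumQ ν k := by exact_mod_cast hB
        linarith
      · right
        obtain ⟨p, rfl⟩ : ∃ p, k = p + 1 := ⟨k - 1, by omega⟩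
        have hp : p < n := by omega
        have hp1 : p + 1 < n := hk2
        have e1 := psumQ_succ ν p hp
        have e2 := psumQ_succ ν (p + 1) hp1
        have e3 := psumQ_succ μ p hp
        have e4 := psumQ_succ μ (p + 1) hp1
        have hμeq : μ ⟨p, hp⟩ = μ ⟨p + 1, hp1⟩ := by
          have h' : (⟨p + 1 - 1, by omega⟩ : Fin n) = ⟨p, hp⟩ := by
            ext; simp
          rw [h'] at heq
          exact heq.symm
        have hνle : ν ⟨p + 1, hp1⟩ ≤ ν ⟨p, hp⟩ := hν _ _ (by simp [Fin.le_def])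
        simp only [Nat.add_sub_cancel]
        linarith
    -- S(μ) ≥ S(ν)
    have hle : ∀ k, k ≤ n → 0 ≤ psumQ μ k - psumQ ν k := by
      refine min_principle n _ (by simp [psumQ_zero]) (by simp [hend]) ?_
      intro k hk1 hk2
      rcases lt_or_eq_of_le (hν ⟨k - 1, by omega⟩ ⟨k, hk2⟩ (by simp only [Fin.le_def]; omega))
        with hlt | heq
      · left
        have hA := F3 k hk1 hk2 hlt
        have hB := H1 k hk1 hk2
        rw [hA] at hB
        have : psumQ ν k ≤ psumQ μ k := by exact_mod_cast hB
        linarith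
      · right
        obtain ⟨p, rfl⟩ : ∃ p, k = p + 1 := ⟨k - 1, by omega⟩
        have hp : p < n := by omega
        have hp1 : p + 1 < n := hk2
        have e1 := psumQ_succ ν p hp
        have e2 := psumQ_succ ν (p + 1) hp1
        have e3 := psumQ_succ μ p hp
        have e4 := psumQ_succ μ (p + 1) hp1
        have hνeq : ν ⟨p, hp⟩ = ν ⟨p + 1, hp1⟩ := by
          have h' : (⟨p + 1 - 1, by omega⟩ : Fin n) = ⟨p, hp⟩ := by
            ext; simp
          rw [h'] at heq
          exact heq.symm
        have hμle : μ ⟨p + 1, hp1⟩ ≤ μ ⟨p, hp⟩ := hμ _ _ (by simp [Fin.le_def])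
        simp only [Nat.add_sub_cancel]
        linarith
    have key : ∀ k, k ≤ n → psumQ ν k = psumQ μ k := fun k hk =>
      le_antisymm (by have := hle k hk; linarith) (by have := hge k hk; linarith)
    funext j
    have hj1 : (j : ℕ) < n := j.2
    have e1 := psumQ_succ ν (j : ℕ) hj1
    have e2 := psumQ_succ μ (j : ℕ) hj1
    have k1 := key (j : ℕ) hj1.le
    have k2 := key ((j : ℕ) + 1) hj1
    simp only [Fin.eta] at e1 e2
    linarith
end
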